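/- Let n ≥ 1 and let θ : F_2^n \ {0} → ℝ be any function. Then there exists a unique family of real numbers (α_s)_{s ∈ F_2^n \ {0}} such that for every x ∈ F_2^n \ {0}, the sum over all nonzero s of α_s·⟨s,x⟩ equals θ(x). -/

import Mathlib

/-- The inner product over `F_2` of two vectors in `F_2^n`, interpreted as the real
number `0` or `1`. -/
def ipR (n : ℕ) (s x : Fin n → ZMod 2) : ℝ := ((∑ i, s i * x i : ZMod 2).val : ℝ)

/-- For any target phases `θ` on the nonzero elements of `F_2^n`, there is a unique family
of reals `(α_s)_{s ≠ 0}` with `∑_{s ≠ 0} α_s·⟨s,x⟩ = θ(x)` for every nonzero `x`. -/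
noncomputable def chi (a : ZMod 2) : ℝ := if a = 0 then 1 else -1

lemma chi_add (a b : ZMod 2) : chi (a + b) = chi a * chi b := by
  rcases (show a = 0 ∨ a = 1 by revert a; decide) with rfl | rfl <;>
    rcases (show b = 0 ∨ b = 1 by revert b; decide) with rfl | rfl <;> simp [chi, show (1+1 : ZMod 2) = 0 from rfl] <;> norm_num

lemma sum_chi_mul (u : ZMod 2) : ∑ b : ZMod 2, chi (u * b) = if u = 0 then 2 else 0 := by
  have h : ∀ f : ZMod 2 → ℝ, ∑ b, f b = f 0 + f 1 := fun f => by
    rw [show (Finset.univ : Finset (ZMod 2)) = {0, 1} by decide]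
    simp
  rcases (show u = 0 ∨ u = 1 by revert u; decide) with rfl | rfl <;> rw [h] <;> norm_num [chi]

lemma char_sum (n : ℕ) (u : Fin n → ZMod 2) (hu : u ≠ 0) :
    ∑ x : Fin n → ZMod 2, chi (∑ i, u i * x i) = 0 := by
  have h1 : ∀ x : Fin n → ZMod 2, chi (∑ i, u i * x i) = ∏ i, chi (u i * x i) := by
    intro x
    induction (Finset.univ : Finset (Fin n)) using Finset.cons_induction with
    | empty => simp [chi]
    | cons a s ha ih => rw [Finset.sum_cons, Finset.prod_cons, chi_add, ih]
  simp_rw [h1]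
  rw [← Fintype.prod_sum (fun i (b : ZMod 2) => chi (u i * b))]
  obtain ⟨i, hi⟩ : ∃ i, u i ≠ 0 := by
    by_contra h; push_neg at h; exact hu (funext fun i => h i)
  exact Finset.prod_eq_zero (Finset.mem_univ i) (by rw [sum_chi_mul, if_neg hi])

lemma char_sum_zero (n : ℕ) :
    ∑ x : Fin n → ZMod 2, chi (∑ i, (0 : Fin n → ZMod 2) i * x i) = 2 ^ n := by
  simp [chi, Finset.card_univ]

lemma val_eq_chi (a : ZMod 2) : ((a.val : ℝ)) = (1 - chi a) / 2 := by
  have h : a = 0 ∨ a = 1 := by revert a; decide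
  rcases h with h | h <;> subst h <;> norm_num [chi, ZMod.val_one]

lemma ipR_eq_chi (n : ℕ) (s x : Fin n → ZMod 2) :
    ipR n s x = (1 - chi (∑ i, s i * x i)) / 2 := val_eq_chi _

lemma ipR_zero (n : ℕ) (s : Fin n → ZMod 2) : ipR n s 0 = 0 := by
  simp [ipR]

lemma ipR_symm (n : ℕ) (s x : Fin n → ZMod 2) : ipR n s x = ipR n x s := by
  simp [ipR, mul_comm]

lemma zmod2_add_eq_zero {m : ℕ} (s t : Fin m → ZMod 2) (h : s + t = 0) : s = t := by
  funext i
  have hi : s i + t i = 0 := congrFun h i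
  revert hi
  have : ∀ a b : ZMod 2, a + b = 0 → a = b := by decide
  exact this _ _

lemma sum_ipR_mul (n : ℕ) (s t : Fin n → ZMod 2) (hs : s ≠ 0) (ht : t ≠ 0) :
    ∑ x : {v : Fin n → ZMod 2 // v ≠ 0}, ipR n s x.val * ipR n t x.val
      = ((2 : ℝ) ^ n + (if s = t then (2 : ℝ) ^ n else 0)) / 4 := by
  classical
  -- extend to the full sum
  have hext : ∑ x : {v : Fin n → ZMod 2 // v ≠ 0}, ipR n s x.val * ipR n t x.val
      = ∑ x : Fin n → ZMod 2, ipR n s x * ipR n t x := by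
    rw [← Finset.sum_subtype (Finset.univ.filter (· ≠ 0))
      (by simp) (fun x => ipR n s x * ipR n t x)]
    rw [Finset.filter_ne']
    exact Finset.sum_erase _ (by simp [ipR_zero])
  rw [hext]
  have key : ∀ x : Fin n → ZMod 2, ipR n s x * ipR n t x
      = (1 - chi (∑ i, s i * x i) - chi (∑ i, t i * x i)
          + chi (∑ i, (s + t) i * x i)) / 4 := by
    intro x
    have hst : (∑ i, (s + t) i * x i) = (∑ i, s i * x i) + (∑ i, t i * x i) := by
      rw [← Finset.sum_add_distrib]
      exact Finset.sum_congr rfl fun i _ => by simp [add_mul]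
    rw [ipR_eq_chi, ipR_eq_chi, hst, chi_add]
    ring
  simp_rw [key]
  rw [← Finset.sum_div]
  congr 1
  rw [Finset.sum_add_distrib, Finset.sum_sub_distrib, Finset.sum_sub_distrib,
    char_sum n s hs, char_sum n t ht, Finset.sum_const, Finset.card_univ]
  have hcard : Fintype.card (Fin n → ZMod 2) = 2 ^ n := by
    simp [Fintype.card_fun]
  by_cases hst : s = t
  · subst hst
    have : s + s = 0 := by
      funext i; have : ∀ a : ZMod 2, a + a = 0 := by decide
      exact this _
    rw [this, if_pos rfl, char_sum_zero, hcard]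
    push_cast; ring
  · have hne : s + t ≠ 0 := fun h => hst (zmod2_add_eq_zero s t h)
    rw [if_neg hst, char_sum n _ hne, hcard]
    push_cast; ring

noncomputable def Mmat (n : ℕ) :
    Matrix {v : Fin n → ZMod 2 // v ≠ 0} {v : Fin n → ZMod 2 // v ≠ 0} ℝ :=
  Matrix.of fun s x => ipR n s.val x.val

lemma Mmat_sq (n : ℕ) :
    Mmat n * Mmat n
      = ((2 : ℝ) ^ n / 4) • (1 + Matrix.of fun _ _ => (1 : ℝ)) := by
  ext s t
  have : (Mmat n * Mmat n) s t
      = ∑ x : {v : Fin n → ZMod 2 // v ≠ 0}, ipR n s.val x.val * ipR n t.val x.val := by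
    simp [Matrix.mul_apply, Mmat]
    exact Finset.sum_congr rfl fun x _ => by rw [ipR_symm n x.val t.val]
  rw [this, sum_ipR_mul n s.val t.val s.property t.property]
  simp only [Matrix.smul_apply, Matrix.add_apply, Matrix.one_apply, Matrix.of_apply,
    smul_eq_mul]
  have hst : (s.val = t.val) ↔ (s = t) := Subtype.ext_iff.symm
  by_cases h : s = t
  · rw [if_pos (hst.mpr h), if_pos h]; ring
  · rw [if_neg (fun hh => h (hst.mp hh)), if_neg h]; ring

lemma Mmat_isUnit (n : ℕ) : IsUnit (Mmat n) := by
  classical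
  set V := {v : Fin n → ZMod 2 // v ≠ 0}
  set J : Matrix V V ℝ := Matrix.of fun _ _ => (1 : ℝ) with hJ
  set N : ℕ := Fintype.card V with hN
  set a : ℝ := ((N : ℝ) + 1)⁻¹ with ha
  have hJJ : J * J = (N : ℝ) • J := by
    ext s t
    simp [hJ, Matrix.mul_apply, Finset.card_univ, hN]
  have hc : ((2 : ℝ) ^ n / 4) ≠ 0 := by positivity
  have hcoef : (1 : ℝ) - a - a * (N : ℝ) = 0 := by
    have hN1 : ((N : ℝ) + 1) ≠ 0 := by positivity
    rw [ha]; field_simp; ring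
  have expand : (1 + J) * (1 - a • J) = 1 + ((1 : ℝ) - a - a * (N : ℝ)) • J := by
    rw [mul_sub, mul_one, add_mul, one_mul, Matrix.mul_smul, hJJ, smul_smul]
    module
  have hinv : (1 + J) * (1 - a • J) = 1 := by
    rw [expand, hcoef, zero_smul, add_zero]
  have hright : Mmat n * (Mmat n * ((2 : ℝ) ^ n / 4)⁻¹ • (1 - a • J)) = 1 := by
    rw [← mul_assoc, Mmat_sq n, Matrix.smul_mul, Matrix.mul_smul, smul_smul,
      mul_inv_cancel₀ hc, one_smul]
    exact hinv
  letI := invertibleOfRightInverse _ _ hright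
  exact isUnit_of_invertible (Mmat n)

theorem existsUnique_alpha (n : ℕ) (hn : 1 ≤ n)
    (θ : {v : Fin n → ZMod 2 // v ≠ 0} → ℝ) :
    ∃! α : {v : Fin n → ZMod 2 // v ≠ 0} → ℝ,
      ∀ x : {v : Fin n → ZMod 2 // v ≠ 0},
        ∑ s : {v : Fin n → ZMod 2 // v ≠ 0}, α s * ipR n s.val x.val = θ x := by

  classical
  have hdet : IsUnit (Mmat n).det := (Matrix.isUnit_iff_isUnit_det _).mp (Mmat_isUnit n)
  have hkey : ∀ (β : {v : Fin n → ZMod 2 // v ≠ 0} → ℝ) x,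
      Matrix.vecMul β (Mmat n) x = ∑ s, β s * ipR n s.val x.val := by
    intro β x
    simp [Matrix.vecMul, dotProduct, Mmat]
  refine ⟨Matrix.vecMul θ (Mmat n)⁻¹, ?_, ?_⟩
  · intro x
    rw [← hkey]
    rw [Matrix.vecMul_vecMul, Matrix.nonsing_inv_mul _ hdet, Matrix.vecMul_one]
  · intro β hβ
    have hβ' : Matrix.vecMul β (Mmat n) = θ := funext fun x => (hkey β x).trans (hβ x)
    rw [← hβ', Matrix.vecMul_vecMul, Matrix.mul_nonsing_inv _ hdet, Matrix.vecMul_one]
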